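/- arXiv:2405.19078 — 2 statements merged into one kernel-verified Lean document; each statement's English description precedes it below -/
import Mathlib

section
/- For a finite simple graph G, the largest eigenvalue of the Laplacian matrix L(G) is at most the maximum over all edges {u,v} of deg(u) + deg(v). -/
open Matrix Finset

lemma AM_key {V : Type*} [Fintype V] [DecidableEq V]
    (G : SimpleGraph V) [DecidableRel G.Adj] (hne : G.edgeFinset.Nonempty)
    (μ : ℝ) (x : V → ℝ) (hx : x ≠ 0)
    (h : G.lapMatrix ℝ *ᵥ x = μ • x) :
    μ ≤ G.edgeFinset.sup' hne
        (Sym2.lift ⟨fun u v => (G.degree u : ℝ) + (G.degree v : ℝ), fun u v => by ring⟩) := by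
  by_cases hμ : μ ≤ 0
  · obtain ⟨e, he⟩ := hne
    refine hμ.trans (le_trans ?_ (Finset.le_sup' _ he))
    induction e with
    | h u v => simp [Sym2.lift]; positivity
  push_neg at hμ
  -- find u maximizing x with x u > 0 (replacing x by -x if needed)
  have main : ∀ (y : V → ℝ), G.lapMatrix ℝ *ᵥ y = μ • y →
      (∃ u, 0 < y u ∧ ∀ w, y w ≤ y u) →
      μ ≤ G.edgeFinset.sup' hne
        (Sym2.lift ⟨fun u v => (G.degree u : ℝ) + (G.degree v : ℝ), fun u v => by ring⟩) := by
    intro y hy ⟨u, hu0, hmax⟩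
    have hyu := congrFun hy u
    rw [SimpleGraph.lapMatrix_mulVec_apply, Pi.smul_apply, smul_eq_mul] at hyu
    have hNne : (G.neighborFinset u).Nonempty := by
      by_contra hempty
      rw [Finset.not_nonempty_iff_eq_empty] at hempty
      have hdeg : G.degree u = 0 := by rw [← SimpleGraph.card_neighborFinset_eq_degree, hempty]; simp
      rw [hdeg, hempty] at hyu
      simp at hyu
      rcases hyu with h0 | h0
      exacts [hμ.ne' h0, hu0.ne' h0]
    obtain ⟨v, hvmem, hvmin⟩ := Finset.exists_min_image (G.neighborFinset u) y hNne
    have hadj : G.Adj u v := (SimpleGraph.mem_neighborFinset _ _ _).mp hvmem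
    have h1 : μ * y u ≤ (G.degree u : ℝ) * (y u - y v) := by
      have : (G.degree u : ℝ) * y v ≤ ∑ w ∈ G.neighborFinset u, y w := by
        rw [← SimpleGraph.card_neighborFinset_eq_degree]
        have := Finset.card_nsmul_le_sum (G.neighborFinset u) y (y v) (fun w hw => hvmin w hw)
        simpa [nsmul_eq_mul] using this
      linarith [hyu]
    have hyv := congrFun hy v
    rw [SimpleGraph.lapMatrix_mulVec_apply, Pi.smul_apply, smul_eq_mul] at hyv
    have h2 : (G.degree v : ℝ) * (y v - y u) ≤ μ * y v := by
      have : ∑ w ∈ G.neighborFinset v, y w ≤ (G.degree v : ℝ) * y u := by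
        rw [← SimpleGraph.card_neighborFinset_eq_degree]
        have := Finset.sum_le_card_nsmul (G.neighborFinset v) y (y u) (fun w _ => hmax w)
        simpa [nsmul_eq_mul] using this
      linarith [hyv]
    have hvu : y v ≤ y u := hmax v
    rcases eq_or_lt_of_le hvu with heq | hlt
    · exfalso; rw [← heq] at h1; nlinarith
    · have hμle : μ ≤ (G.degree u : ℝ) + (G.degree v : ℝ) := by nlinarith
      refine hμle.trans (le_trans ?_ (Finset.le_sup' _ (SimpleGraph.mem_edgeFinset.mpr (G.mem_edgeSet.mpr hadj))))
      simp [Sym2.lift]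
  -- get such u for x or -x
  obtain ⟨w0, hw0⟩ : ∃ w, x w ≠ 0 := by
    by_contra hc; push_neg at hc; exact hx (funext fun w => hc w)
  have : Nonempty V := ⟨w0⟩
  rcases lt_or_gt_of_ne hw0 with hneg | hpos
  · -- use -x
    obtain ⟨u, _, hu⟩ := Finset.exists_max_image Finset.univ (-x) ⟨w0, Finset.mem_univ w0⟩
    refine main (-x) ?_ ⟨u, ?_, fun w => hu w (Finset.mem_univ w)⟩
    · rw [mulVec_neg, h]; ext w; simp
    · have := hu w0 (Finset.mem_univ w0); simp at this ⊢; linarith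
  · obtain ⟨u, _, hu⟩ := Finset.exists_max_image Finset.univ x ⟨w0, Finset.mem_univ w0⟩
    exact main x h ⟨u, lt_of_lt_of_le hpos (hu w0 (Finset.mem_univ w0)),
      fun w => hu w (Finset.mem_univ w)⟩

/-- Anderson–Morley bound: the largest eigenvalue of the Laplacian of a graph with at
least one edge is at most the maximum of `deg u + deg v` over edges `{u, v}`. -/
theorem stmt8 {V : Type*} [Fintype V] [DecidableEq V]
    (G : SimpleGraph V) [DecidableRel G.Adj]
    (hL : (G.lapMatrix ℝ).IsHermitian)
    (hne : G.edgeFinset.Nonempty) :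
    (⨆ i, hL.eigenvalues i) ≤
      G.edgeFinset.sup' hne
        (Sym2.lift ⟨fun u v => (G.degree u : ℝ) + (G.degree v : ℝ),
          fun u v => by ring⟩) := by
  have : Nonempty V := by
    obtain ⟨e, he⟩ := hne
    exact ⟨e.out.1⟩
  refine ciSup_le fun i => ?_
  refine AM_key G hne _ (⇑(hL.eigenvectorBasis i)) ?_ ?_
  · intro h0
    apply (hL.eigenvectorBasis).toBasis.ne_zero i
    rw [OrthonormalBasis.coe_toBasis]
    ext w
    exact congrFun h0 w
  · exact hL.mulVec_eigenvectorBasis i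
end

section
/- Let B be a real m×n matrix such that every row of B has exactly two nonzero entries, one equal to +1 and one equal to −1 (i.e., B is the incidence matrix of an oriented graph). Then the largest eigenvalue of B^T B is at most the maximum over rows of B of the sum over its two nonzero columns j of the number of rows with a nonzero entry in column j. -/
open Matrix Classical

section Aux

variable {m n : ℕ} (B : Matrix (Fin m) (Fin n) ℝ)

private lemma aux_entry (hrow : ∀ i : Fin m, ∃ j k : Fin n, j ≠ k ∧ B i j = 1 ∧ B i k = -1 ∧
      ∀ l : Fin n, l ≠ j → l ≠ k → B i l = 0) (r : Fin m) (l : Fin n) :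
    B r l = 0 ∨ |B r l| = 1 := by
  obtain ⟨j, k, hjk, hj, hk, h0⟩ := hrow r
  by_cases h1 : l = j
  · right; rw [h1, hj]; norm_num
  by_cases h2 : l = k
  · right; rw [h2, hk]; norm_num
  · left; exact h0 l h1 h2

private lemma aux_deg (hrow : ∀ i : Fin m, ∃ j k : Fin n, j ≠ k ∧ B i j = 1 ∧ B i k = -1 ∧
      ∀ l : Fin n, l ≠ j → l ≠ k → B i l = 0) (j : Fin n) :
    ((Finset.univ.filter (fun r : Fin m => B r j ≠ 0)).card : ℝ) = ∑ r : Fin m, |B r j| := by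
  rw [Finset.card_eq_sum_ones, Nat.cast_sum]
  rw [← Finset.sum_filter_ne_zero Finset.univ (f := fun r => |B r j|)]
  have : (Finset.univ.filter (fun r : Fin m => |B r j| ≠ 0)) =
      (Finset.univ.filter (fun r : Fin m => B r j ≠ 0)) := by
    apply Finset.filter_congr; intro r _; simp [abs_ne_zero]
  rw [this]
  apply Finset.sum_congr rfl
  intro r hr
  simp only [Finset.mem_filter] at hr
  rcases aux_entry B hrow r j with h | h
  · exact absurd h hr.2
  · simp [h]

end Aux

/-- Anderson–Morley bound in matrix form: if every row of `B` has exactly two nonzero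
entries, one `+1` and one `-1` (so `B` is the incidence matrix of an oriented graph),
then the largest eigenvalue of `Bᵀ * B` is at most the maximum over rows of the sum,
over the two nonzero columns `j` of that row, of the number of rows having a nonzero
entry in column `j`. -/
theorem stmt19 {m n : ℕ} (B : Matrix (Fin m) (Fin n) ℝ)
    (hrow : ∀ i : Fin m, ∃ j k : Fin n, j ≠ k ∧ B i j = 1 ∧ B i k = -1 ∧
      ∀ l : Fin n, l ≠ j → l ≠ k → B i l = 0)
    (hL : (Bᵀ * B).IsHermitian) :
    (⨆ p, hL.eigenvalues p) ≤
      ⨆ i : Fin m, ∑ j ∈ Finset.univ.filter (fun j : Fin n => B i j ≠ 0),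
        ((Finset.univ.filter (fun r : Fin m => B r j ≠ 0)).card : ℝ) := by
  set D : Fin n → ℝ := fun j => ((Finset.univ.filter (fun r : Fin m => B r j ≠ 0)).card : ℝ)
    with hD
  set T : Fin m → ℝ := fun i => ∑ j ∈ Finset.univ.filter (fun j : Fin n => B i j ≠ 0), D j
    with hT
  have hTnonneg : ∀ i, 0 ≤ T i := by
    intro i
    apply Finset.sum_nonneg
    intro j _
    positivity
  have hBdd : BddAbove (Set.range T) := (Set.finite_range T).bddAbove
  have hRHS0 : 0 ≤ ⨆ i, T i := by
    rcases Nat.eq_zero_or_pos m with hm | hm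
    · subst hm
      exact le_of_eq (Real.iSup_of_isEmpty T).symm
    · have i0 : Fin m := ⟨0, hm⟩
      exact le_trans (hTnonneg i0) (le_ciSup hBdd i0)
  apply Real.iSup_le _ hRHS0
  intro p
  set lam := hL.eigenvalues p with hlam
  by_cases hpos : lam ≤ 0
  · exact le_trans hpos hRHS0
  push_neg at hpos
  -- eigenvector of BᵀB
  set v : Fin n → ℝ := ⇑(hL.eigenvectorBasis p) with hv
  have hveq : (Bᵀ * B) *ᵥ v = lam • v := hL.mulVec_eigenvectorBasis p
  have hvne : v ≠ 0 := by
    have := (hL.eigenvectorBasis).toBasis.ne_zero p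
    intro h
    apply this
    ext l
    exact congrFun h l
  -- transfer to B * Bᵀ
  set w : Fin m → ℝ := B *ᵥ v with hw
  have hwne : w ≠ 0 := by
    intro h
    have : (Bᵀ * B) *ᵥ v = 0 := by
      rw [← Matrix.mulVec_mulVec]
      rw [show B *ᵥ v = w from rfl, h, Matrix.mulVec_zero]
    rw [hveq] at this
    have : v = 0 := by
      have := congrArg (fun x => lam⁻¹ • x) this
      simpa [smul_smul, inv_mul_cancel₀ (ne_of_gt hpos)] using this
    exact hvne this
  have hweq : (B * Bᵀ) *ᵥ w = lam • w := by
    rw [hw, Matrix.mulVec_mulVec, Matrix.mul_assoc, ← Matrix.mulVec_mulVec, hveq,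
      Matrix.mulVec_smul]
  have heig : Module.End.HasEigenvalue (Matrix.toLin' (B * Bᵀ)) lam := by
    apply Module.End.hasEigenvalue_of_hasEigenvector (x := w)
    constructor
    · rw [Module.End.mem_eigenspace_iff, Matrix.toLin'_apply, hweq]
    · exact hwne
  obtain ⟨i, hi⟩ := eigenvalue_mem_ball heig
  rw [Metric.mem_closedBall, Real.dist_eq] at hi
  obtain ⟨j, k, hjk, hj, hk, h0⟩ := hrow i
  -- diagonal entry
  have hC : ∀ e : Fin m, (B * Bᵀ) i e = B i j * B e j + B i k * B e k := by
    intro e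
    rw [Matrix.mul_apply]
    have hsub : ({j, k} : Finset (Fin n)) ⊆ Finset.univ := Finset.subset_univ _
    rw [← Finset.sum_subset hsub (fun x _ hx => by
      simp only [Finset.mem_insert, Finset.mem_singleton, not_or] at hx
      rw [Matrix.transpose_apply, h0 x hx.1 hx.2, zero_mul])]
    rw [Finset.sum_pair hjk]
    simp [Matrix.transpose_apply]
  have hdiag : (B * Bᵀ) i i = 2 := by
    rw [hC i, hj, hk]; norm_num
  -- off-diagonal sum bound
  have hoff : ∑ e ∈ Finset.univ.erase i, ‖(B * Bᵀ) i e‖ ≤ D j + D k - 2 := by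
    have hstep : ∀ e : Fin m, ‖(B * Bᵀ) i e‖ ≤ |B e j| + |B e k| := by
      intro e
      rw [hC e, hj, hk, Real.norm_eq_abs]
      calc |1 * B e j + -1 * B e k| ≤ |1 * B e j| + |-1 * B e k| := abs_add_le _ _
        _ = |B e j| + |B e k| := by rw [abs_mul, abs_mul]; norm_num
    calc ∑ e ∈ Finset.univ.erase i, ‖(B * Bᵀ) i e‖
        ≤ ∑ e ∈ Finset.univ.erase i, (|B e j| + |B e k|) :=
          Finset.sum_le_sum (fun e _ => hstep e)
      _ = (∑ e ∈ Finset.univ.erase i, |B e j|) + (∑ e ∈ Finset.univ.erase i, |B e k|) :=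
          Finset.sum_add_distrib
      _ = ((∑ e : Fin m, |B e j|) - |B i j|) + ((∑ e : Fin m, |B e k|) - |B i k|) := by
          rw [Finset.sum_erase_eq_sub (Finset.mem_univ i),
            Finset.sum_erase_eq_sub (Finset.mem_univ i)]
      _ = D j + D k - 2 := by
          rw [hD]
          simp only
          rw [aux_deg B hrow j, aux_deg B hrow k, hj, hk]
          norm_num
          ring
  -- row term
  have hTi : T i = D j + D k := by
    rw [hT]
    simp only
    have : (Finset.univ.filter (fun l : Fin n => B i l ≠ 0)) = {j, k} := by
      ext l
      simp only [Finset.mem_filter, Finset.mem_univ, true_and, Finset.mem_insert,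
        Finset.mem_singleton]
      constructor
      · intro hne
        by_contra hc
        push_neg at hc
        exact hne (h0 l hc.1 hc.2)
      · rintro (rfl | rfl)
        · rw [hj]; norm_num
        · rw [hk]; norm_num
    rw [this, Finset.sum_pair hjk]
  have hle : lam ≤ T i := by
    have h1 : lam - (B * Bᵀ) i i ≤ |lam - (B * Bᵀ) i i| := le_abs_self _
    have := le_trans h1 hi
    rw [hdiag] at this
    have := le_trans (by linarith : lam ≤ 2 + ∑ e ∈ Finset.univ.erase i, ‖(B * Bᵀ) i e‖)
      (by linarith : 2 + ∑ e ∈ Finset.univ.erase i, ‖(B * Bᵀ) i e‖ ≤ 2 + (D j + D k - 2))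
    rw [hTi]; linarith
  exact le_trans hle (le_ciSup hBdd i)
end
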